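/- arXiv:1801.01014 — 2 statements merged into one kernel-verified Lean document; each statement's English description precedes it below -/
import Mathlib

section
/- Let (X,d) be an unbounded metric space, p∈X, and let n≥2 be an integer. Then the inequality |V(G_{X,r̃})| ≤ n holds for every scaling sequence r̃ if and only if both of the following hold: (1) F_n(x_1,…,x_n) tends to 0 as max_{1≤k≤n} d(x_k,p) tends to ∞, where F_n(x_1,…,x_n) := (min_{1≤k≤n} d(x_k,p) · Π_{1≤k<l≤n} d(x_k,x_l)) / (max_{1≤k≤n} d(x_k,p))^{n(n−1)/2+1} for (x_1,…,x_n)≠(p,…,p) and F_n(p,…,p):=0; and (2) lim_{k→1⁺} limsup_{r→∞} diam(A(p,r,k))/r = limsup_{r→∞} diam(S(p,r))/r = 0, where A(p,r,k) = {x∈X : r/k ≤ d(x,p) ≤ rk} and S(p,r) = {x∈X : d(x,p)=r}, and diam(∅):=0. -/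
open Filter Topology
open scoped Classical

/-- An unbounded metric space. -/
def UnboundedSpace (X : Type*) [MetricSpace X] : Prop :=
  ¬ Bornology.IsBounded (Set.univ : Set X)

/-- A scaling sequence: positive reals tending to infinity. -/
def ScalingSeq (r : ℕ → ℝ) : Prop :=
  (∀ n, 0 < r n) ∧ Filter.Tendsto r Filter.atTop Filter.atTop

/-- Two sequences are mutually stable w.r.t. `r` if `d(x_n, y_n)/r_n` has a finite limit. -/
def MutuallyStable {X : Type*} [MetricSpace X] (r : ℕ → ℝ) (x y : ℕ → X) : Prop :=
  ∃ L : ℝ, Filter.Tendsto (fun n => dist (x n) (y n) / r n) Filter.atTop (nhds L)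

/-- `Seq(X, r̃)`: sequences going to infinity such that `d(x_n, p)/r_n` has a finite limit. -/
def SeqInf {X : Type*} [MetricSpace X] (r : ℕ → ℝ) (p : X) : Set (ℕ → X) :=
  {x | Filter.Tendsto (fun n => dist (x n) p) Filter.atTop Filter.atTop ∧
    ∃ L : ℝ, Filter.Tendsto (fun n => dist (x n) p / r n) Filter.atTop (nhds L)}

/-- The relation `x̃ ≡ ỹ`, i.e. `d(x_n, y_n)/r_n → 0`. -/
def EquivSeq {X : Type*} [MetricSpace X] (r : ℕ → ℝ) (x y : ℕ → X) : Prop :=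
  Filter.Tendsto (fun n => dist (x n) (y n) / r n) Filter.atTop (nhds 0)

/-- The `≡`-equivalence class of `x` inside `Seq(X, r̃)`. -/
def classOf {X : Type*} [MetricSpace X] (r : ℕ → ℝ) (p : X) (x : ℕ → X) : Set (ℕ → X) :=
  {y | y ∈ SeqInf r p ∧ EquivSeq r x y}

/-- The vertex set of the cluster graph `G_{X, r̃}`: all `≡`-classes of `Seq(X, r̃)`. -/
def VertexSet {X : Type*} [MetricSpace X] (r : ℕ → ℝ) (p : X) : Set (Set (ℕ → X)) :=
  {v | ∃ x ∈ SeqInf r p, v = classOf r p x}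

/-- Adjacency in the cluster graph `G_{X, r̃}`: distinct classes whose representatives
are mutually stable. -/
def AdjacentCl {X : Type*} [MetricSpace X] (r : ℕ → ℝ) (p : X) (u v : Set (ℕ → X)) : Prop :=
  u ∈ VertexSet r p ∧ v ∈ VertexSet r p ∧ u ≠ v ∧
    ∀ x ∈ u, ∀ y ∈ v, MutuallyStable r x y

/-- The weight `ρ_X` on the cluster graph: for an edge `{u,v}` it is the (unique) limit
`lim d(x_n, y_n)/r_n` for representatives. -/
noncomputable def rhoX {X : Type*} [MetricSpace X] (r : ℕ → ℝ) (u v : Set (ℕ → X)) : ℝ :=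
  sSup {L : ℝ | ∃ x ∈ u, ∃ y ∈ v,
    Filter.Tendsto (fun n => dist (x n) (y n) / r n) Filter.atTop (nhds L)}

/-- The root `ν₀ = X̃⁰_{∞,r̃}`: sequences with `d(z_n,p) → ∞` and `d(z_n,p)/r_n → 0`. -/
def rootClass {X : Type*} [MetricSpace X] (r : ℕ → ℝ) (p : X) : Set (ℕ → X) :=
  {z | Filter.Tendsto (fun n => dist (z n) p) Filter.atTop Filter.atTop ∧
    Filter.Tendsto (fun n => dist (z n) p / r n) Filter.atTop (nhds 0)}

/-- The labeling `ρ⁰` of vertices: `ρ⁰(v) = lim d(x_n,p)/r_n` for `x̃ ∈ v`. -/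
noncomputable def rho0 {X : Type*} [MetricSpace X] (r : ℕ → ℝ) (p : X)
    (v : Set (ℕ → X)) : ℝ :=
  sSup {L : ℝ | ∃ x ∈ v, Filter.Tendsto (fun n => dist (x n) p / r n) Filter.atTop (nhds L)}

/-- A self-stable family: a subset of `Seq(X, r̃)` any two of whose members are
mutually stable. -/
def SelfStable {X : Type*} [MetricSpace X] (r : ℕ → ℝ) (p : X) (F : Set (ℕ → X)) : Prop :=
  F ⊆ SeqInf r p ∧ ∀ x ∈ F, ∀ y ∈ F, MutuallyStable r x y

/-- A maximal self-stable set `X̃_{∞, r̃}`. -/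
def MaxSelfStable {X : Type*} [MetricSpace X] (r : ℕ → ℝ) (p : X) (F : Set (ℕ → X)) : Prop :=
  SelfStable r p F ∧ ∀ F', SelfStable r p F' → F ⊆ F' → F = F'

/-- The pretangent space `Ω^X_{∞,r̃}` attached to a maximal self-stable set `F`:
the set of `≡`-classes of members of `F`. -/
def PretangentCl {X : Type*} [MetricSpace X] (r : ℕ → ℝ) (F : Set (ℕ → X)) :
    Set (Set (ℕ → X)) :=
  {v | ∃ x ∈ F, v = {y | y ∈ F ∧ EquivSeq r x y}}

/-- A clique in the cluster graph `G_{X, r̃}`. -/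
def IsCliqueCl {X : Type*} [MetricSpace X] (r : ℕ → ℝ) (p : X)
    (C : Set (Set (ℕ → X))) : Prop :=
  C ⊆ VertexSet r p ∧ ∀ u ∈ C, ∀ v ∈ C, u ≠ v → AdjacentCl r p u v

/-- The function `F_n` of Theorem t2.2.1. -/
noncomputable def FnFun {X : Type*} [MetricSpace X] (p : X) (n : ℕ) (x : Fin n → X) : ℝ :=
  if ∀ k, x k = p then 0
  else (⨅ k, dist (x k) p) *
      (∏ k : Fin n, ∏ l : Fin n, if k < l then dist (x k) (x l) else 1) /
      (⨆ k, dist (x k) p) ^ (n * (n - 1) / 2 + 1)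

/-- The condition that `F_n(x_1, …, x_n) → 0` as `max_k d(x_k, p) → ∞`. -/
def CondF {X : Type*} [MetricSpace X] (p : X) (n : ℕ) : Prop :=
  ∀ ε : ℝ, 0 < ε → ∃ M : ℝ, ∀ x : Fin n → X,
    M ≤ (⨆ k, dist (x k) p) → |FnFun p n x| < ε

/-- The annulus `A(p, R, k) = {x : R/k ≤ d(x,p) ≤ R·k}`; `A(p, R, 1)` is the sphere
`S(p, R)`. -/
def annulus {X : Type*} [MetricSpace X] (p : X) (R k : ℝ) : Set X :=
  {x | R / k ≤ dist x p ∧ dist x p ≤ R * k}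

/-- `Ψ(k) = limsup_{R → ∞} diam(A(p, R, k)) / R` (with `diam ∅ = 0`). -/
noncomputable def Psi {X : Type*} [MetricSpace X] (p : X) (k : ℝ) : ℝ :=
  Filter.limsup (fun R : ℝ => Metric.diam (annulus p R k) / R) Filter.atTop

/-- The condition `lim_{k→1⁺} limsup_{R→∞} diam(A(p,R,k))/R
= limsup_{R→∞} diam(S(p,R))/R = 0`. -/
def CondA {X : Type*} [MetricSpace X] (p : X) : Prop :=
  Filter.Tendsto (fun k => Psi p k) (nhdsWithin 1 (Set.Ioi 1)) (nhds 0) ∧ Psi p 1 = 0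


section AuxLemmas

open Filter Topology

variable {X : Type*} [MetricSpace X]

lemma equivSeq_refl (r : ℕ → ℝ) (x : ℕ → X) : EquivSeq r x x := by
  simp only [EquivSeq, dist_self, zero_div]
  exact tendsto_const_nhds

lemma equivSeq_symm {r : ℕ → ℝ} {x y : ℕ → X} (h : EquivSeq r x y) : EquivSeq r y x := by
  simpa only [EquivSeq, dist_comm] using h

lemma equivSeq_trans {r : ℕ → ℝ} (hr : ∀ n, 0 < r n) {x y z : ℕ → X}
    (h1 : EquivSeq r x y) (h2 : EquivSeq r y z) : EquivSeq r x z := by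
  have h3 := h1.add h2
  rw [add_zero] at h3
  refine squeeze_zero (fun m => div_nonneg dist_nonneg (hr m).le) (fun m => ?_) h3
  rw [← add_div]
  exact div_le_div_of_nonneg_right (dist_triangle _ _ _) (hr m).le

lemma mem_classOf_self {r : ℕ → ℝ} {p : X} {x : ℕ → X} (hx : x ∈ SeqInf r p) :
    x ∈ classOf r p x := ⟨hx, equivSeq_refl r x⟩

lemma classOf_eq {r : ℕ → ℝ} (hr : ∀ n, 0 < r n) (p : X) {x y : ℕ → X}
    (h : EquivSeq r x y) : classOf r p x = classOf r p y := by
  ext z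
  constructor
  · rintro ⟨hz, hxz⟩; exact ⟨hz, equivSeq_trans hr (equivSeq_symm h) hxz⟩
  · rintro ⟨hz, hyz⟩; exact ⟨hz, equivSeq_trans hr h hyz⟩

lemma equiv_of_classOf_eq {r : ℕ → ℝ} {p : X} {x y : ℕ → X} (hy : y ∈ SeqInf r p)
    (h : classOf r p x = classOf r p y) : EquivSeq r x y := by
  have hmem : y ∈ classOf r p x := h ▸ mem_classOf_self hy
  exact hmem.2

lemma not_equivSeq_of_frequently {r : ℕ → ℝ} {x y : ℕ → X} {c : ℝ} (hc : 0 < c)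
    (h : ∃ᶠ m in atTop, c ≤ dist (x m) (y m) / r m) : ¬ EquivSeq r x y := by
  intro he
  have h2 : ∀ᶠ m in atTop, dist (x m) (y m) / r m < c := he.eventually_lt_const hc
  rcases (h.and_eventually h2).exists with ⟨m, h3, h4⟩
  linarith

lemma many_classes {r : ℕ → ℝ} (hr : ScalingSeq r) {p : X} {m : ℕ}
    (y : Fin m → ℕ → X) (hy : ∀ i, y i ∈ SeqInf r p)
    (hne : ∀ i j, i ≠ j → ¬ EquivSeq r (y i) (y j)) :
    (m : Cardinal) ≤ Cardinal.mk ↥(VertexSet r p) := by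
  have hinj : Function.Injective (fun i : ULift.{_} (Fin m) =>
      (⟨classOf r p (y i.down), y i.down, hy i.down, rfl⟩ : ↥(VertexSet r p))) := by
    intro i j hij
    by_contra hne'
    have hdij : i.down ≠ j.down := fun h => hne' (ULift.ext _ _ h)
    exact hne i.down j.down hdij
      (equiv_of_classOf_eq (hy j.down) (congrArg Subtype.val hij))
  have := Cardinal.mk_le_of_injective hinj
  simpa using this

lemma exists_far (hX : UnboundedSpace X) (p : X) (c : ℝ) : ∃ x : X, c ≤ dist x p := by
  by_contra h
  push_neg at h
  apply hX
  refine Metric.isBounded_iff.2 ⟨c + c, fun x _ y _ => ?_⟩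
  calc dist x y ≤ dist x p + dist p y := dist_triangle _ _ _
  _ = dist x p + dist y p := by rw [dist_comm p y]
  _ ≤ c + c := by have := h x; have := h y; linarith [(h x).le, (h y).le]


lemma exists_root (hX : UnboundedSpace X) (p : X) {r : ℕ → ℝ} (hr : ScalingSeq r) :
    ∃ z : ℕ → X, z ∈ SeqInf r p ∧
      Tendsto (fun m => dist (z m) p / r m) atTop (𝓝 0) := by
  choose w hw using fun i : ℕ => exists_far hX p (i : ℝ)
  set ψ : ℕ → ℕ := fun m => Nat.findGreatest (fun i => dist (w i) p ≤ Real.sqrt (r m)) m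
    with hψdef
  have hsq : Tendsto (fun m => Real.sqrt (r m)) atTop atTop := by
    rw [tendsto_atTop]
    intro b
    filter_upwards [hr.2.eventually_ge_atTop (b ^ 2)] with m hm
    calc b ≤ |b| := le_abs_self b
    _ = Real.sqrt (b ^ 2) := (Real.sqrt_sq_eq_abs b).symm
    _ ≤ Real.sqrt (r m) := Real.sqrt_le_sqrt hm
  have hP : ∀ i : ℕ, ∀ᶠ m in atTop, i ≤ m ∧ dist (w i) p ≤ Real.sqrt (r m) :=
    fun i => (eventually_ge_atTop i).and (hsq.eventually_ge_atTop _)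
  have hψi : ∀ i : ℕ, ∀ᶠ m in atTop, i ≤ ψ m := fun i =>
    (hP i).mono fun m hm => Nat.le_findGreatest hm.1 hm.2
  have hψtop : Tendsto ψ atTop atTop := tendsto_atTop.2 hψi
  have hlow : ∀ m, (ψ m : ℝ) ≤ dist (w (ψ m)) p := fun m => hw _
  have hub : ∀ᶠ m in atTop, dist (w (ψ m)) p ≤ Real.sqrt (r m) := by
    filter_upwards [hP 0] with m hm
    exact Nat.findGreatest_spec (P := fun i => dist (w i) p ≤ Real.sqrt (r m)) (Nat.zero_le m) hm.2
  have htop : Tendsto (fun m => dist (w (ψ m)) p) atTop atTop :=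
    tendsto_atTop_mono hlow (tendsto_natCast_atTop_atTop.comp hψtop)
  have hratio : Tendsto (fun m => dist (w (ψ m)) p / r m) atTop (𝓝 0) := by
    have hg : Tendsto (fun m => 1 / Real.sqrt (r m)) atTop (𝓝 0) := by
      simpa only [one_div, Function.comp_def] using tendsto_inv_atTop_zero.comp hsq
    refine squeeze_zero' (Eventually.of_forall fun m =>
      div_nonneg dist_nonneg (hr.1 m).le) ?_ hg
    filter_upwards [hub] with m hm
    calc dist (w (ψ m)) p / r m ≤ Real.sqrt (r m) / r m :=
          div_le_div_of_nonneg_right hm (hr.1 m).le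
    _ = 1 / Real.sqrt (r m) := Real.sqrt_div_self'
  exact ⟨fun m => w (ψ m), ⟨htop, 0, hratio⟩, hratio⟩

lemma annulus_isBounded (p : X) (R k : ℝ) : Bornology.IsBounded (annulus p R k) :=
  Metric.isBounded_closedBall.subset fun x hx => hx.2

lemma annulus_diam_le {p : X} {R k : ℝ} (hR : 0 < R) (hk : 0 ≤ k) :
    Metric.diam (annulus p R k) / R ≤ 2 * k := by
  have h1 : Metric.diam (annulus p R k) ≤ 2 * (R * k) := by
    refine Metric.diam_le_of_forall_dist_le (by positivity) ?_
    intro x hx y hy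
    calc dist x y ≤ dist x p + dist y p := dist_triangle_right x y p
    _ ≤ R * k + R * k := add_le_add hx.2 hy.2
    _ = 2 * (R * k) := by ring
  rw [div_le_iff₀ hR]
  nlinarith

lemma psi_boundedUnder (p : X) {k : ℝ} (hk : 0 ≤ k) :
    IsBoundedUnder (· ≤ ·) atTop (fun R : ℝ => Metric.diam (annulus p R k) / R) :=
  isBoundedUnder_of_eventually_le (a := 2 * k)
    ((eventually_gt_atTop 0).mono fun R hR => annulus_diam_le hR hk)

lemma psi_nonneg_fun (p : X) (k : ℝ) :
    ∀ᶠ R in (atTop : Filter ℝ), 0 ≤ Metric.diam (annulus p R k) / R :=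
  (eventually_gt_atTop 0).mono fun R hR => div_nonneg Metric.diam_nonneg hR.le

lemma psi_nonneg (p : X) {k : ℝ} (hk : 0 ≤ k) : 0 ≤ Psi p k :=
  Filter.le_limsup_of_frequently_le (psi_nonneg_fun p k).frequently (psi_boundedUnder p hk)

lemma exists_pair_of_diam {s : Set X} {t : ℝ} (ht : 0 ≤ t) (h : t < Metric.diam s) :
    ∃ x ∈ s, ∃ y ∈ s, t < dist x y := by
  by_contra hc
  push_neg at hc
  exact absurd (Metric.diam_le_of_forall_dist_le ht fun x hx y hy => hc x hx y hy)
    (not_le.2 h)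

lemma prod_pairs {M : Type*} [CommMonoid M] (n : ℕ) (g : Fin n → Fin n → M) :
    (∏ k : Fin n, ∏ l : Fin n, if k < l then g k l else 1)
      = ∏ q ∈ (Finset.univ.filter (fun q : Fin n × Fin n => q.1 < q.2)), g q.1 q.2 := by
  rw [Finset.prod_filter, ← Finset.univ_product_univ]
  exact (Finset.prod_product' (f := fun k l => if k < l then g k l else 1)
    (s := Finset.univ) (t := Finset.univ)).symm

lemma card_pairs (n : ℕ) :
    (Finset.univ.filter (fun q : Fin n × Fin n => q.1 < q.2)).card = n * (n - 1) / 2 := by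
  rw [Finset.card_eq_sum_card_fiberwise (f := Prod.fst) (t := Finset.univ)
    (fun x _ => Finset.mem_univ _)]
  have h1 : ∀ k : Fin n,
      ((Finset.univ.filter (fun q : Fin n × Fin n => q.1 < q.2)).filter
        (fun x => x.1 = k)) = (Finset.Ioi k).map
          ⟨fun l => (k, l), fun a b hab => by simpa using hab⟩ := by
    intro k
    ext ⟨a, b⟩
    simp only [Finset.mem_filter, Finset.mem_univ, true_and, Finset.mem_map,
      Function.Embedding.coeFn_mk, Finset.mem_Ioi, Prod.mk.injEq]
    constructor
    · rintro ⟨hab, rfl⟩; exact ⟨b, hab, rfl⟩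
    · rintro ⟨l, hl, rfl, rfl⟩; exact ⟨hl, rfl⟩
  have h2 : ∀ k : Fin n,
      ((Finset.univ.filter (fun q : Fin n × Fin n => q.1 < q.2)).filter
        (fun x => x.1 = k)).card = n - 1 - (k : ℕ) := by
    intro k
    rw [h1 k, Finset.card_map, Fin.card_Ioi]
  rw [Finset.sum_congr rfl fun k _ => h2 k]
  rw [Fin.sum_univ_eq_sum_range (fun i => n - 1 - i) n]
  have := Finset.sum_range_reflect (fun i => i) n
  calc ∑ i ∈ Finset.range n, (n - 1 - i) = ∑ i ∈ Finset.range n, i := by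
        rw [← this]
  _ = n * (n - 1) / 2 := Finset.sum_range_id n


lemma annulus_contra {p : X} {n : ℕ}
    (H : ∀ r : ℕ → ℝ, ScalingSeq r → Cardinal.mk ↥(VertexSet r p) ≤ (n : Cardinal))
    (k R : ℕ → ℝ) (x y : ℕ → X) (c : ℝ) (hc : 0 < c)
    (hk1 : ∀ j, 1 ≤ k j) (hk2 : ∀ j, k j ≤ 2) (hk : Tendsto k atTop (𝓝 1))
    (hR0 : ∀ j, 0 < R j) (hRtop : Tendsto R atTop atTop)
    (hx : ∀ j, R j / k j ≤ dist (x j) p ∧ dist (x j) p ≤ R j * k j)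
    (hy : ∀ j, R j / k j ≤ dist (y j) p ∧ dist (y j) p ≤ R j * k j)
    (hd : ∀ j, c * R j ≤ dist (x j) (y j)) : False := by
  have hrs : ScalingSeq R := ⟨hR0, hRtop⟩
  set u : Fin (n + 1) → ℕ → X := fun i m => if m % (n + 1) = i.val then x m else y m
    with hu
  have hub : ∀ i m, R m / k m ≤ dist (u i m) p ∧ dist (u i m) p ≤ R m * k m := by
    intro i m
    by_cases h : m % (n + 1) = i.val <;> simp only [hu, h, if_true, if_false,
      reduceIte] <;> [exact hx m; exact hy m]
  have hSeq : ∀ i, u i ∈ SeqInf R p := by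
    intro i
    constructor
    · refine tendsto_atTop_mono (fun m => ?_) (hRtop.atTop_div_const two_pos)
      calc R m / 2 ≤ R m / k m :=
            div_le_div_of_nonneg_left (hR0 m).le (by linarith [hk1 m]) (hk2 m)
      _ ≤ dist (u i m) p := (hub i m).1
    · refine ⟨1, ?_⟩
      have hinv : Tendsto (fun m => 1 / k m) atTop (𝓝 1) := by
        have h := (tendsto_const_nhds (x := (1:ℝ)) (f := atTop)).div hk one_ne_zero
        rw [div_one] at h
        exact h.congr fun m => rfl
      refine tendsto_of_tendsto_of_tendsto_of_le_of_le hinv hk (fun m => ?_) (fun m => ?_)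
      · have h1 : R m / k m / R m = 1 / k m := by
          rw [div_div, mul_comm, ← div_div, div_self (hR0 m).ne']
        rw [← h1]
        exact div_le_div_of_nonneg_right (hub i m).1 (hR0 m).le
      · have h1 : R m * k m / R m = k m := by
          rw [mul_comm, mul_div_assoc, div_self (hR0 m).ne', mul_one]
        rw [← h1]
        exact div_le_div_of_nonneg_right (hub i m).2 (hR0 m).le
  have hne : ∀ i j : Fin (n + 1), i ≠ j → ¬ EquivSeq R (u i) (u j) := by
    intro i j hij
    refine not_equivSeq_of_frequently hc ?_
    have hfreq : ∃ᶠ m in atTop, m % (n + 1) = i.val := by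
      refine frequently_atTop.2 fun a => ⟨i.val + a * (n + 1), ?_, ?_⟩
      · calc a ≤ a * (n + 1) := Nat.le_mul_of_pos_right a (Nat.succ_pos n)
        _ ≤ i.val + a * (n + 1) := Nat.le_add_left _ _
      · rw [Nat.add_mul_mod_self_right]
        exact Nat.mod_eq_of_lt i.isLt
    refine hfreq.mono fun m hm => ?_
    have hmj : ¬ (m % (n + 1) = j.val) := by
      rw [hm]; exact fun h => hij (Fin.ext h)
    have : dist (u i m) (u j m) = dist (x m) (y m) := by
      simp only [hu, if_pos hm, if_neg hmj]
    rw [this]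
    exact (le_div_iff₀ (hR0 m)).2 (by linarith [hd m])
  have h1 := many_classes hrs u hSeq hne
  have h2 := H R hrs
  have h3 := h1.trans h2
  have h4 : n + 1 ≤ n := by exact_mod_cast h3
  omega


lemma cobounded_annulus (p : X) (k : ℝ) :
    IsCoboundedUnder (· ≤ ·) (atTop : Filter ℝ)
      (fun R => Metric.diam (annulus p R k) / R) := by
  have hb : IsBoundedUnder (· ≥ ·) (atTop : Filter ℝ)
      (fun R => Metric.diam (annulus p R k) / R) :=
    isBoundedUnder_of_eventually_ge (psi_nonneg_fun p k)
  exact hb.isCoboundedUnder_le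

lemma forward_condA {p : X} {n : ℕ}
    (H : ∀ r : ℕ → ℝ, ScalingSeq r → Cardinal.mk ↥(VertexSet r p) ≤ (n : Cardinal)) :
    CondA p := by
  have hpsi1 : Psi p 1 = 0 := by
    by_contra h
    have hpos : 0 < Psi p 1 := (psi_nonneg p zero_le_one).lt_of_ne (Ne.symm h)
    have hfreq : ∃ᶠ R in (atTop : Filter ℝ),
        Psi p 1 / 2 < Metric.diam (annulus p R 1) / R :=
      Filter.frequently_lt_of_lt_limsup (cobounded_annulus p 1) (half_lt_self hpos)
    have hsel : ∀ j : ℕ, ∃ R : ℝ, max (j : ℝ) 1 ≤ R ∧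
        Psi p 1 / 2 < Metric.diam (annulus p R 1) / R := fun j =>
      frequently_atTop.1 hfreq (max (j : ℝ) 1)
    choose R hR1 hR2 using hsel
    have hR0 : ∀ j, 0 < R j := fun j =>
      lt_of_lt_of_le (lt_of_lt_of_le one_pos (le_max_right _ _)) (hR1 j)
    have hRtop : Tendsto R atTop atTop :=
      tendsto_atTop_mono (fun j => (le_max_left _ _).trans (hR1 j))
        tendsto_natCast_atTop_atTop
    have hsel2 : ∀ j : ℕ, ∃ a ∈ annulus p (R j) 1, ∃ b ∈ annulus p (R j) 1,
        Psi p 1 / 2 * R j < dist a b := fun j =>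
      exists_pair_of_diam (mul_nonneg (half_pos hpos).le (hR0 j).le)
        ((lt_div_iff₀ (hR0 j)).1 (hR2 j))
    choose xx hxx yy hyy hdist using hsel2
    exact annulus_contra H (fun _ => 1) R xx yy (Psi p 1 / 2) (half_pos hpos)
      (fun _ => le_refl 1) (fun _ => one_le_two) tendsto_const_nhds hR0 hRtop
      (fun j => hxx j) (fun j => hyy j) (fun j => (hdist j).le)
  refine ⟨?_, hpsi1⟩
  by_contra hT
  rw [Metric.tendsto_nhds] at hT
  push_neg at hT
  obtain ⟨ε, hε, hfr⟩ := hT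
  have hsel : ∀ j : ℕ, ∃ k : ℝ, (1 < k ∧ k < 1 + 1 / ((j : ℝ) + 1)) ∧ ε ≤ Psi p k := by
    intro j
    have hU : Set.Ioo (1 : ℝ) (1 + 1 / ((j : ℝ) + 1)) ∈ 𝓝[>] (1 : ℝ) := by
      refine Ioo_mem_nhdsGT_of_mem ⟨le_refl 1, ?_⟩
      have : 0 < 1 / ((j : ℝ) + 1) := by positivity
      linarith
    have hfr2 : ∃ᶠ k in 𝓝[>] (1 : ℝ), ε ≤ Psi p k := by
      refine (Filter.Eventually.and_frequently eventually_mem_nhdsWithin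
        (Filter.not_eventually.1 hfr)).mono ?_
      rintro kk ⟨hmem, hk⟩
      have hk0 : (0 : ℝ) ≤ kk := zero_le_one.trans (le_of_lt hmem)
      simp only [not_not] at hk
      rwa [Real.dist_0_eq_abs, abs_of_nonneg (psi_nonneg p hk0)] at hk
    rcases ((eventually_of_mem hU fun x hx => hx).and_frequently hfr2).exists
      with ⟨kk, hkk1, hkk2⟩
    exact ⟨kk, hkk1, hkk2⟩
  choose k hk1 hkP using hsel
  have hk1' : ∀ j, 1 ≤ k j := fun j => (hk1 j).1.le
  have hk2 : ∀ j, k j ≤ 2 := by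
    intro j
    have h1 : 1 / ((j : ℝ) + 1) ≤ 1 := by
      rw [div_le_one (by positivity)]
      simp
    linarith [(hk1 j).2]
  have hktend : Tendsto k atTop (𝓝 1) := by
    have hup : Tendsto (fun j : ℕ => 1 + 1 / ((j : ℝ) + 1)) atTop (𝓝 1) := by
      have := tendsto_one_div_add_atTop_nhds_zero_nat (𝕜 := ℝ)
      have h2 := tendsto_const_nhds (x := (1:ℝ)) (f := (atTop : Filter ℕ)) |>.add this
      simpa using h2
    exact tendsto_of_tendsto_of_tendsto_of_le_of_le tendsto_const_nhds hup
      (fun j => (hk1 j).1.le) (fun j => (hk1 j).2.le)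
  have hfreqR : ∀ j : ℕ, ∃ R : ℝ, max (j : ℝ) 1 ≤ R ∧
      ε / 2 < Metric.diam (annulus p R (k j)) / R := by
    intro j
    have : ε / 2 < Psi p (k j) := lt_of_lt_of_le (half_lt_self hε) (hkP j)
    exact frequently_atTop.1
      (Filter.frequently_lt_of_lt_limsup (cobounded_annulus p (k j)) this) _
  choose R hR1 hR2 using hfreqR
  have hR0 : ∀ j, 0 < R j := fun j =>
    lt_of_lt_of_le (lt_of_lt_of_le one_pos (le_max_right _ _)) (hR1 j)
  have hRtop : Tendsto R atTop atTop :=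
    tendsto_atTop_mono (fun j => (le_max_left _ _).trans (hR1 j))
      tendsto_natCast_atTop_atTop
  have hsel2 : ∀ j : ℕ, ∃ a ∈ annulus p (R j) (k j), ∃ b ∈ annulus p (R j) (k j),
      ε / 2 * R j < dist a b := fun j =>
    exists_pair_of_diam (mul_nonneg (half_pos hε).le (hR0 j).le)
      ((lt_div_iff₀ (hR0 j)).1 (hR2 j))
  choose xx hxx yy hyy hdist using hsel2
  exact annulus_contra H k R xx yy (ε / 2) (half_pos hε) hk1' hk2 hktend hR0 hRtop
    (fun j => hxx j) (fun j => hyy j) (fun j => (hdist j).le)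


lemma forward_condF (hX : UnboundedSpace X) {p : X} {n : ℕ} (hn : 2 ≤ n)
    (H : ∀ r : ℕ → ℝ, ScalingSeq r → Cardinal.mk ↥(VertexSet r p) ≤ (n : Cardinal)) :
    CondF p n := by
  haveI : Nonempty (Fin n) := ⟨⟨0, by omega⟩⟩
  by_contra hC
  unfold CondF at hC
  push_neg at hC
  obtain ⟨ε, hε, hM⟩ := hC
  choose x hx1 hx2 using fun m : ℕ => hM ((m : ℝ) + 1)
  set N := n * (n - 1) / 2 with hN
  set s : Finset (Fin n × Fin n) := Finset.univ.filter (fun q : Fin n × Fin n => q.1 < q.2)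
    with hs
  have hcard : s.card = N := card_pairs n
  have hN1 : 1 ≤ N := by
    have h2 : 2 ≤ n * (n - 1) := by
      have h3 := Nat.mul_le_mul hn (show 1 ≤ n - 1 by omega)
      simpa using h3
    rw [hN]
    omega
  set R : ℕ → ℝ := fun m => ⨆ k, dist (x m k) p with hR
  have hR1 : ∀ m : ℕ, ((m : ℝ) + 1) ≤ R m := by
    intro m
    simp only [hR]
    exact hx1 m
  have hR0 : ∀ m, 0 < R m := fun m => lt_of_lt_of_le (by positivity) (hR1 m)
  have hle : ∀ m k, dist (x m k) p ≤ R m := by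
    intro m k
    simp only [hR]
    exact le_ciSup (f := fun k => dist (x m k) p)
      (Set.Finite.bddAbove (Set.finite_range _)) k
  have hform : ∀ m, ε ≤ (⨅ k, dist (x m k) p) * (∏ q ∈ s, dist (x m q.1) (x m q.2))
      / R m ^ (N + 1) := by
    intro m
    have hnp : ¬ ∀ k, x m k = p := by
      intro hall
      have h0 : FnFun p n (x m) = 0 := by rw [FnFun, if_pos hall]
      have h1 := hx2 m
      rw [h0, abs_zero] at h1
      exact absurd h1 (not_le.2 hε)
    have hval : FnFun p n (x m) = (⨅ k, dist (x m k) p) *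
        (∏ q ∈ s, dist (x m q.1) (x m q.2)) / R m ^ (N + 1) := by
      simp only [hs, hR, hN]
      rw [FnFun, if_neg hnp, prod_pairs]
    have habs : |FnFun p n (x m)| = FnFun p n (x m) := by
      rw [abs_of_nonneg]
      rw [hval]
      have h1 : 0 ≤ ⨅ k, dist (x m k) p := Real.iInf_nonneg fun k => dist_nonneg
      have h2 : 0 ≤ ∏ q ∈ s, dist (x m q.1) (x m q.2) :=
        Finset.prod_nonneg fun q _ => dist_nonneg
      have h3 : 0 < R m ^ (N + 1) := pow_pos (hR0 m) _
      positivity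
    rw [← hval, ← habs]
    exact hx2 m
  have hmin_le : ∀ m, (⨅ k, dist (x m k) p) ≤ R m := fun m =>
    le_trans (ciInf_le (Set.Finite.bddBelow (Set.finite_range _)) ⟨0, by omega⟩)
      (hle m _)
  set c1 : ℝ := ε / 2 ^ N with hc1
  have hc1pos : 0 < c1 := by positivity
  have hpairle : ∀ m, ∀ q ∈ s, dist (x m q.1) (x m q.2) ≤ 2 * R m := by
    intro m q _
    calc dist (x m q.1) (x m q.2) ≤ dist (x m q.1) p + dist (x m q.2) p :=
          dist_triangle_right _ _ _
    _ ≤ R m + R m := add_le_add (hle m _) (hle m _)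
    _ = 2 * R m := by ring
  have hkey0 : ∀ m, ε * R m ^ (N + 1) ≤
      (⨅ k, dist (x m k) p) * ∏ q ∈ s, dist (x m q.1) (x m q.2) := fun m =>
    (le_div_iff₀ (pow_pos (hR0 m) _)).1 (hform m)
  have hmin : ∀ m k, c1 * R m ≤ dist (x m k) p := by
    intro m k
    have h2 : (⨅ k, dist (x m k) p) * (∏ q ∈ s, dist (x m q.1) (x m q.2))
        ≤ (⨅ k, dist (x m k) p) * (2 * R m) ^ N := by
      refine mul_le_mul_of_nonneg_left ?_ (Real.iInf_nonneg fun k => dist_nonneg)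
      calc ∏ q ∈ s, dist (x m q.1) (x m q.2) ≤ ∏ _q ∈ s, 2 * R m :=
            Finset.prod_le_prod (fun q _ => dist_nonneg) (hpairle m)
      _ = (2 * R m) ^ N := by rw [Finset.prod_const, hcard]
    have h3 : (ε * R m) * R m ^ N ≤ ((⨅ k, dist (x m k) p) * 2 ^ N) * R m ^ N := by
      have h0 := (hkey0 m).trans h2
      rw [pow_succ, mul_pow] at h0
      calc (ε * R m) * R m ^ N = ε * (R m ^ N * R m) := by ring
      _ ≤ (⨅ k, dist (x m k) p) * (2 ^ N * R m ^ N) := h0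
      _ = ((⨅ k, dist (x m k) p) * 2 ^ N) * R m ^ N := by ring
    have h4 := le_of_mul_le_mul_right h3 (pow_pos (hR0 m) N)
    have h5 : c1 * R m ≤ ⨅ k, dist (x m k) p := by
      rw [hc1, div_mul_eq_mul_div, div_le_iff₀ (by positivity : (0:ℝ) < 2 ^ N)]
      linarith
    exact le_trans h5 (ciInf_le (Set.Finite.bddBelow (Set.finite_range _)) k)
  have hpair : ∀ m, ∀ q ∈ s, c1 * R m ≤ dist (x m q.1) (x m q.2) := by
    intro m q hq
    have herase : (∏ q' ∈ s.erase q, dist (x m q'.1) (x m q'.2)) ≤ (2 * R m) ^ (N - 1) := by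
      calc ∏ q' ∈ s.erase q, dist (x m q'.1) (x m q'.2) ≤ ∏ _q' ∈ s.erase q, 2 * R m :=
            Finset.prod_le_prod (fun q' _ => dist_nonneg)
              (fun q' hq' => hpairle m q' (Finset.mem_of_mem_erase hq'))
      _ = (2 * R m) ^ (N - 1) := by
            rw [Finset.prod_const, Finset.card_erase_of_mem hq, hcard]
    have hP : (∏ q' ∈ s, dist (x m q'.1) (x m q'.2))
        = dist (x m q.1) (x m q.2) * ∏ q' ∈ s.erase q, dist (x m q'.1) (x m q'.2) :=
      (Finset.mul_prod_erase s _ hq).symm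
    have h2 : (⨅ k, dist (x m k) p) * ∏ q' ∈ s, dist (x m q'.1) (x m q'.2)
        ≤ R m * (dist (x m q.1) (x m q.2) * (2 * R m) ^ (N - 1)) := by
      refine mul_le_mul (hmin_le m) ?_ ?_ (hR0 m).le
      · rw [hP]
        exact mul_le_mul_of_nonneg_left herase dist_nonneg
      · rw [hP]
        exact mul_nonneg dist_nonneg (Finset.prod_nonneg fun q' _ => dist_nonneg)
    have hRN : R m * R m ^ (N - 1) = R m ^ N := by
      rw [← pow_succ']
      congr 1
      omega
    have h3 : (ε * R m) * R m ^ N ≤ (dist (x m q.1) (x m q.2) * 2 ^ (N - 1)) * R m ^ N := by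
      have h0 := (hkey0 m).trans h2
      calc (ε * R m) * R m ^ N = ε * R m ^ (N + 1) := by rw [pow_succ]; ring
      _ ≤ R m * (dist (x m q.1) (x m q.2) * (2 * R m) ^ (N - 1)) := h0
      _ = (dist (x m q.1) (x m q.2) * 2 ^ (N - 1)) * (R m * R m ^ (N - 1)) := by
            rw [mul_pow]; ring
      _ = (dist (x m q.1) (x m q.2) * 2 ^ (N - 1)) * R m ^ N := by rw [hRN]
    have h4 := le_of_mul_le_mul_right h3 (pow_pos (hR0 m) N)
    have h5 : ε * R m ≤ dist (x m q.1) (x m q.2) * 2 ^ N := by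
      refine h4.trans (mul_le_mul_of_nonneg_left ?_ dist_nonneg)
      exact pow_le_pow_right₀ one_le_two (by omega)
    rw [hc1, div_mul_eq_mul_div, div_le_iff₀ (by positivity : (0:ℝ) < 2 ^ N)]
    linarith
  -- extract a subsequence along which all the normalized distances converge
  set u : ℕ → (Fin n → ℝ) := fun m k => dist (x m k) p / R m with hu
  have humem : ∀ m, u m ∈ Set.Icc (fun _ : Fin n => c1) (fun _ : Fin n => (1:ℝ)) := by
    intro m
    rw [Set.mem_Icc]
    constructor
    · intro k
      simp only [hu]
      exact (le_div_iff₀ (hR0 m)).2 (hmin m k)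
    · intro k
      simp only [hu]
      exact div_le_one_of_le₀ (hle m k) (hR0 m).le
  obtain ⟨a, _ha, φ, hφ, hconv⟩ :=
    (isCompact_Icc (a := fun _ : Fin n => c1) (b := fun _ : Fin n => (1:ℝ))).tendsto_subseq
      humem
  set r' : ℕ → ℝ := fun m => R (φ m) with hr'
  have hr'pos : ∀ m, 0 < r' m := fun m => hR0 _
  have hr'top : Tendsto r' atTop atTop := by
    refine tendsto_atTop_mono (fun m => ?_)
      (tendsto_atTop_add_const_right _ 1 tendsto_natCast_atTop_atTop)
    calc ((m : ℝ) + 1) ≤ ((φ m : ℕ) : ℝ) + 1 := by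
          have h0 : m ≤ φ m := hφ.le_apply
          have : ((m : ℕ) : ℝ) ≤ ((φ m : ℕ) : ℝ) := Nat.cast_le.2 h0
          linarith
    _ ≤ R (φ m) := hR1 (φ m)
  have hscal : ScalingSeq r' := ⟨hr'pos, hr'top⟩
  have hconv' : ∀ k : Fin n, Tendsto (fun m => dist (x (φ m) k) p / r' m) atTop (𝓝 (a k)) :=
    fun k => (tendsto_pi_nhds.1 hconv) k
  have hXseq : ∀ k : Fin n, (fun m => x (φ m) k) ∈ SeqInf r' p := by
    intro k
    constructor
    · exact tendsto_atTop_mono (fun m => hmin (φ m) k) (hr'top.const_mul_atTop hc1pos)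
    · exact ⟨a k, hconv' k⟩
  have hXfar : ∀ k l : Fin n, k ≠ l → ∀ m,
      c1 ≤ dist (x (φ m) k) (x (φ m) l) / r' m := by
    intro k l hkl m
    rcases lt_or_gt_of_ne hkl with h | h
    · have hq : ((k, l) : Fin n × Fin n) ∈ s := by simp [hs, h]
      exact (le_div_iff₀ (hr'pos m)).2 (hpair (φ m) _ hq)
    · have hq : ((l, k) : Fin n × Fin n) ∈ s := by simp [hs, h]
      rw [dist_comm]
      exact (le_div_iff₀ (hr'pos m)).2 (hpair (φ m) _ hq)
  obtain ⟨z, hzseq, hzratio⟩ := exists_root hX p hscal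
  have hzfar : ∀ k : Fin n, ¬ EquivSeq r' z (fun m => x (φ m) k) := by
    intro k
    refine not_equivSeq_of_frequently (half_pos hc1pos) ?_
    have hev : ∀ᶠ m in atTop, dist (z m) p / r' m < c1 / 2 :=
      hzratio.eventually_lt_const (half_pos hc1pos)
    refine (hev.mono fun m hm => ?_).frequently
    have h1 : c1 ≤ dist (x (φ m) k) p / r' m :=
      (le_div_iff₀ (hr'pos m)).2 (hmin (φ m) k)
    have h2 : dist (x (φ m) k) p / r' m
        ≤ dist (z m) (x (φ m) k) / r' m + dist (z m) p / r' m := by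
      rw [← add_div]
      refine div_le_div_of_nonneg_right ?_ (hr'pos m).le
      calc dist (x (φ m) k) p ≤ dist (x (φ m) k) (z m) + dist (z m) p :=
            dist_triangle _ _ _
      _ = dist (z m) (x (φ m) k) + dist (z m) p := by rw [dist_comm]
    linarith
  set Y : Fin (n + 1) → ℕ → X := Fin.cons z (fun k m => x (φ m) k) with hY
  have hYseq : ∀ i, Y i ∈ SeqInf r' p := by
    refine Fin.cases ?_ ?_
    · simpa [hY] using hzseq
    · intro k; simpa [hY] using hXseq k
  have hYne : ∀ i j : Fin (n + 1), i ≠ j → ¬ EquivSeq r' (Y i) (Y j) := by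
    refine Fin.cases ?_ ?_
    · refine Fin.cases ?_ ?_
      · intro h; exact absurd rfl h
      · intro k _
        simpa [hY] using hzfar k
    · intro k
      refine Fin.cases ?_ ?_
      · intro _
        intro he
        have : EquivSeq r' z (fun m => x (φ m) k) := by
          refine equivSeq_symm ?_
          simpa [hY] using he
        exact hzfar k this
      · intro l hkl
        have hkl' : k ≠ l := fun h => hkl (by rw [h])
        have hne2 : ¬ EquivSeq r' (fun m => x (φ m) k) (fun m => x (φ m) l) :=
          not_equivSeq_of_frequently hc1pos
            (Eventually.of_forall (hXfar k l hkl')).frequently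
        simpa [hY] using hne2
  have h1 := many_classes hscal Y hYseq hYne
  have h2 := H r' hscal
  have h4 : n + 1 ≤ n := by exact_mod_cast h1.trans h2
  omega


lemma same_limit_equiv {p : X}
    (hA1 : Tendsto (fun k => Psi p k) (nhdsWithin 1 (Set.Ioi 1)) (nhds 0))
    {r : ℕ → ℝ} (hr : ScalingSeq r) {x y : ℕ → X} {a : ℝ}
    (hx : Tendsto (fun m => dist (x m) p / r m) atTop (𝓝 a))
    (hy : Tendsto (fun m => dist (y m) p / r m) atTop (𝓝 a)) :
    EquivSeq r x y := by
  have ha0 : 0 ≤ a := ge_of_tendsto hx (Eventually.of_forall fun m =>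
    div_nonneg dist_nonneg (hr.1 m).le)
  rcases eq_or_lt_of_le ha0 with ha | ha
  · have hsum : Tendsto (fun m => dist (x m) p / r m + dist (y m) p / r m)
        atTop (𝓝 0) := by
      have h0 := hx.add hy
      rw [← ha, add_zero] at h0
      exact h0
    refine squeeze_zero (fun m => div_nonneg dist_nonneg (hr.1 m).le) (fun m => ?_) hsum
    rw [← add_div]
    exact div_le_div_of_nonneg_right (dist_triangle_right _ _ _) (hr.1 m).le
  · rw [EquivSeq, NormedAddCommGroup.tendsto_nhds_zero]
    intro ε hε
    set b : ℝ := ε / (2 * (a + 1)) with hb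
    have hbpos : 0 < b := by positivity
    have hev : ∀ᶠ k in 𝓝[>] (1:ℝ), Psi p k < b := hA1.eventually_lt_const hbpos
    obtain ⟨k, hkb, hk1⟩ := (hev.and eventually_mem_nhdsWithin).exists
    rw [Set.mem_Ioi] at hk1
    have hk0 : 0 < k := lt_trans one_pos hk1
    have hdiam : ∀ᶠ R in (atTop : Filter ℝ), Metric.diam (annulus p R k) / R < b :=
      Filter.eventually_lt_of_limsup_lt hkb (psi_boundedUnder p hk0.le)
    have hRm : Tendsto (fun m => a * r m) atTop atTop := hr.2.const_mul_atTop ha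
    have hdiam' : ∀ᶠ m in atTop, Metric.diam (annulus p (a * r m) k) / (a * r m) < b :=
      hRm.eventually hdiam
    have hmul : a < a * k := by nlinarith
    have hdivlt : a / k < a := div_lt_self ha hk1
    have hxk : ∀ᶠ m in atTop, dist (x m) p / r m ∈ Set.Ioo (a / k) (a * k) :=
      hx.eventually (Ioo_mem_nhds hdivlt hmul)
    have hyk : ∀ᶠ m in atTop, dist (y m) p / r m ∈ Set.Ioo (a / k) (a * k) :=
      hy.eventually (Ioo_mem_nhds hdivlt hmul)
    filter_upwards [hdiam', hxk, hyk] with m h1 h2 h3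
    have hrm := hr.1 m
    have hRpos : 0 < a * r m := by positivity
    have hmem : ∀ w : X, dist w p / r m ∈ Set.Ioo (a / k) (a * k) →
        w ∈ annulus p (a * r m) k := by
      intro w hw
      constructor
      · calc a * r m / k = a / k * r m := by ring
        _ ≤ dist w p := ((lt_div_iff₀ hrm).1 hw.1).le
      · calc dist w p ≤ a * k * r m := ((div_lt_iff₀ hrm).1 hw.2).le
        _ = a * r m * k := by ring
    have hdle : dist (x m) (y m) ≤ Metric.diam (annulus p (a * r m) k) :=
      Metric.dist_le_diam_of_mem (annulus_isBounded p _ k) (hmem _ h2) (hmem _ h3)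
    have hdiam2 : Metric.diam (annulus p (a * r m) k) < b * (a * r m) :=
      (div_lt_iff₀ hRpos).1 h1
    have h5 : dist (x m) (y m) / r m < b * a := by
      rw [div_lt_iff₀ hrm]
      calc dist (x m) (y m) ≤ Metric.diam (annulus p (a * r m) k) := hdle
      _ < b * (a * r m) := hdiam2
      _ = b * a * r m := by ring
    have h6 : b * a < ε := by
      rw [hb, div_mul_eq_mul_div, div_lt_iff₀ (by positivity : (0:ℝ) < 2 * (a + 1))]
      nlinarith
    rw [Real.norm_eq_abs, abs_of_nonneg (div_nonneg dist_nonneg hrm.le)]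
    linarith

lemma backward_direction {p : X} {n : ℕ} (hn : 2 ≤ n) (hF : CondF p n)
    (hA1 : Tendsto (fun k => Psi p k) (nhdsWithin 1 (Set.Ioi 1)) (nhds 0)) :
    ∀ r : ℕ → ℝ, ScalingSeq r → Cardinal.mk ↥(VertexSet r p) ≤ (n : Cardinal) := by
  intro r hr
  by_contra hlt
  rw [not_le] at hlt
  have hsucc : ((n + 1 : ℕ) : Cardinal) ≤ Cardinal.mk ↥(VertexSet r p) := by
    have h0 := Order.succ_le_of_lt hlt
    rwa [← Cardinal.nat_succ] at h0
  have hemb : Nonempty (ULift.{_} (Fin (n + 1)) ↪ ↥(VertexSet r p)) := by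
    rw [show ((n + 1 : ℕ) : Cardinal) = Cardinal.mk (ULift.{_} (Fin (n + 1))) by simp]
      at hsucc
    exact Cardinal.le_def _ _ |>.1 hsucc
  obtain ⟨f⟩ := hemb
  set v : Fin (n + 1) → ↥(VertexSet r p) := fun i => f ⟨i⟩ with hv
  have hvinj : Function.Injective v := by
    intro i j hij
    have h0 := f.injective hij
    exact congrArg ULift.down h0
  have hvmem : ∀ i, (v i : Set (ℕ → X)) ∈ VertexSet r p := fun i => (v i).2
  choose xx hxxSeq hxxcl using hvmem
  choose aa haa using fun i => (hxxSeq i).2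
  have hainj : Function.Injective aa := by
    intro i j hij
    by_contra hne
    have haj : Tendsto (fun m => dist (xx j m) p / r m) atTop (𝓝 (aa i)) := by
      rw [hij]; exact haa j
    have hequiv : EquivSeq r (xx i) (xx j) := same_limit_equiv hA1 hr (haa i) haj
    have hcl : classOf r p (xx i) = classOf r p (xx j) := classOf_eq hr.1 p hequiv
    have hveq : v i = v j := Subtype.ext (by rw [hxxcl i, hxxcl j, hcl])
    exact hne (hvinj hveq)
  have ha0 : ∀ i, 0 ≤ aa i := fun i => ge_of_tendsto (haa i)
    (Eventually.of_forall fun m => div_nonneg dist_nonneg (hr.1 m).le)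
  obtain ⟨i0, -, hi0⟩ := Finset.exists_min_image Finset.univ aa ⟨0, Finset.mem_univ 0⟩
  haveI : Nonempty (Fin n) := ⟨⟨0, by omega⟩⟩
  set e : Fin n → Fin (n + 1) := i0.succAbove with he
  set b : Fin n → ℝ := fun k => aa (e k) with hbdef
  set y : Fin n → ℕ → X := fun k => xx (e k) with hydef
  have hbpos : ∀ k, 0 < b k := by
    intro k
    have h1 : aa i0 ≤ b k := hi0 _ (Finset.mem_univ _)
    have h2 : aa i0 ≠ b k := fun h => (Fin.succAbove_ne i0 k) (hainj h).symm
    have h3 : aa i0 < b k := lt_of_le_of_ne h1 h2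
    exact lt_of_le_of_lt (ha0 i0) h3
  have hbinj : Function.Injective b := fun k l h =>
    Fin.succAbove_right_injective (hainj h)
  obtain ⟨k0, -, hβ⟩ := Finset.exists_min_image Finset.univ b ⟨⟨0, by omega⟩,
    Finset.mem_univ _⟩
  have hβpos : 0 < b k0 := hbpos k0
  have hpairs_ne : (Finset.univ.filter (fun q : Fin n × Fin n => q.1 ≠ q.2)).Nonempty := by
    refine ⟨(⟨0, by omega⟩, ⟨1, by omega⟩), ?_⟩
    simp [Fin.ext_iff]
  obtain ⟨q0, hq0mem, hγ⟩ := Finset.exists_min_image _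
    (fun q : Fin n × Fin n => |b q.1 - b q.2|) hpairs_ne
  have hγpos : 0 < |b q0.1 - b q0.2| := by
    rw [abs_pos, sub_ne_zero]
    exact fun h => (Finset.mem_filter.1 hq0mem).2 (hbinj h)
  set γ : ℝ := |b q0.1 - b q0.2| with hγdef
  have hγle : ∀ kk ll : Fin n, kk ≠ ll → γ ≤ |b kk - b ll| := fun kk ll h =>
    hγ (kk, ll) (by simp [h])
  obtain ⟨kB, -, hB⟩ := Finset.exists_max_image Finset.univ b ⟨⟨0, by omega⟩,
    Finset.mem_univ _⟩
  set B : ℝ := b kB with hBdef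
  have hBle : ∀ k, b k ≤ B := fun k => hB k (Finset.mem_univ k)
  have hBpos : 0 < B := lt_of_lt_of_le hβpos (hBle k0)
  set β : ℝ := b k0 with hβdef
  have hβle : ∀ k, β ≤ b k := fun k => hβ k (Finset.mem_univ k)
  set δ : ℝ := min (min (β / 2) (γ / 4)) 1 with hδdef
  have hδpos : 0 < δ :=
    lt_min (lt_min (by positivity) (by positivity)) one_pos
  have hδβ : δ ≤ β / 2 := le_trans (min_le_left _ _) (min_le_left _ _)
  have hδγ : δ ≤ γ / 4 := le_trans (min_le_left _ _) (min_le_right _ _)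
  have hδ1 : δ ≤ 1 := min_le_right _ _
  set N := n * (n - 1) / 2 with hN
  set s : Finset (Fin n × Fin n) := Finset.univ.filter (fun q : Fin n × Fin n => q.1 < q.2)
    with hs
  have hcard : s.card = N := card_pairs n
  set ε0 : ℝ := (β / 2) * (γ / 2) ^ N / (B + 1) ^ (N + 1) with hε0
  have hε0pos : 0 < ε0 := by positivity
  obtain ⟨M, hM⟩ := hF ε0 hε0pos
  have hev1 : ∀ᶠ m in atTop, ∀ kk : Fin n,
      dist (y kk m) p / r m ∈ Set.Ioo (b kk - δ) (b kk + δ) := by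
    refine eventually_all.2 fun kk => ?_
    exact (haa (e kk)).eventually (Ioo_mem_nhds (by linarith [hbpos kk]) (by linarith))
  have hevM : ∀ᶠ m in atTop, M ≤ dist (y k0 m) p := by
    have htend : Tendsto (fun m => dist (y k0 m) p) atTop atTop := by
      have h1 : Tendsto (fun m => (dist (y k0 m) p / r m) * r m) atTop atTop :=
        Tendsto.pos_mul_atTop (hbpos k0) (haa (e k0)) hr.2
      refine h1.congr fun m => ?_
      exact div_mul_cancel₀ _ (hr.1 m).ne'
    exact htend.eventually_ge_atTop M
  obtain ⟨m, hm1, hmM⟩ := (hev1.and hevM).exists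
  have hrm := hr.1 m
  have hlow : ∀ kk, (β / 2) * r m ≤ dist (y kk m) p := by
    intro kk
    have h1 := (hm1 kk).1
    have h2 : β / 2 ≤ b kk - δ := by
      have h3 := hβle kk
      linarith
    exact (le_div_iff₀ hrm).1 (le_of_lt (lt_of_le_of_lt h2 h1))
  have hup : ∀ kk, dist (y kk m) p ≤ (B + 1) * r m := by
    intro kk
    have h1 := (hm1 kk).2
    have h2 : dist (y kk m) p / r m ≤ B + 1 := by
      have h3 := hBle kk
      linarith
    exact (div_le_iff₀ hrm).1 h2
  have hpairlow : ∀ q ∈ s, (γ / 2) * r m ≤ dist (y q.1 m) (y q.2 m) := by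
    intro q hq
    have hne : q.1 ≠ q.2 := ne_of_lt (Finset.mem_filter.1 hq).2
    have h1 := hm1 q.1
    have h2 := hm1 q.2
    have hγq := hγle q.1 q.2 hne
    have habs : γ - 2 * δ ≤ |dist (y q.1 m) p / r m - dist (y q.2 m) p / r m| := by
      rcases le_total (b q.1) (b q.2) with hbb | hbb
      · have hg : γ ≤ b q.2 - b q.1 := by
          rw [abs_sub_comm, abs_of_nonneg (by linarith)] at hγq
          exact hγq
        have h4 : γ - 2 * δ ≤ dist (y q.2 m) p / r m - dist (y q.1 m) p / r m := by
          have := h1.2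
          have := h2.1
          linarith [h1.2, h2.1]
        calc γ - 2 * δ ≤ dist (y q.2 m) p / r m - dist (y q.1 m) p / r m := h4
        _ ≤ |dist (y q.2 m) p / r m - dist (y q.1 m) p / r m| := le_abs_self _
        _ = |dist (y q.1 m) p / r m - dist (y q.2 m) p / r m| := abs_sub_comm _ _
      · have hg : γ ≤ b q.1 - b q.2 := by
          rw [abs_of_nonneg (by linarith)] at hγq
          exact hγq
        have h4 : γ - 2 * δ ≤ dist (y q.1 m) p / r m - dist (y q.2 m) p / r m := by
          linarith [h1.1, h2.2]
        exact le_trans h4 (le_abs_self _)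
    have h5 : |dist (y q.1 m) p / r m - dist (y q.2 m) p / r m|
        = |dist (y q.1 m) p - dist (y q.2 m) p| / r m := by
      rw [div_sub_div_same, abs_div, abs_of_pos hrm]
    have h6 : |dist (y q.1 m) p - dist (y q.2 m) p| ≤ dist (y q.1 m) (y q.2 m) :=
      abs_dist_sub_le _ _ _
    have h7 : γ / 2 ≤ dist (y q.1 m) (y q.2 m) / r m := by
      have h8 : γ - 2 * δ ≤ dist (y q.1 m) (y q.2 m) / r m := by
        rw [h5] at habs
        exact le_trans habs (div_le_div_of_nonneg_right h6 hrm.le)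
      linarith
    exact (le_div_iff₀ hrm).1 h7
  set xm : Fin n → X := fun kk => y kk m with hxm
  have hsup_le : (⨆ kk, dist (xm kk) p) ≤ (B + 1) * r m := ciSup_le fun kk => hup kk
  have hsup_ge : (β / 2) * r m ≤ ⨆ kk, dist (xm kk) p :=
    le_trans (hlow k0) (le_ciSup (f := fun kk => dist (xm kk) p)
      (Set.Finite.bddAbove (Set.finite_range _)) k0)
  have hsup_geM : M ≤ ⨆ kk, dist (xm kk) p :=
    le_trans hmM (le_ciSup (f := fun kk => dist (xm kk) p)
      (Set.Finite.bddAbove (Set.finite_range _)) k0)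
  have hFlt := hM xm hsup_geM
  have hnp : ¬ ∀ kk, xm kk = p := by
    intro hall
    have h0 : dist (xm k0) p = 0 := by rw [hall k0, dist_self]
    have h1 := hlow k0
    nlinarith
  have hval : FnFun p n xm = (⨅ kk, dist (xm kk) p) *
      (∏ q ∈ s, dist (xm q.1) (xm q.2)) / (⨆ kk, dist (xm kk) p) ^ (N + 1) := by
    simp only [hs, hN]
    rw [FnFun, if_neg hnp, prod_pairs]
  have hmin_ge : (β / 2) * r m ≤ ⨅ kk, dist (xm kk) p := le_ciInf fun kk => hlow kk
  have hprod_ge : ((γ / 2) * r m) ^ N ≤ ∏ q ∈ s, dist (xm q.1) (xm q.2) := by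
    calc ((γ / 2) * r m) ^ N = ∏ _q ∈ s, (γ / 2) * r m := by
          rw [Finset.prod_const, hcard]
    _ ≤ ∏ q ∈ s, dist (xm q.1) (xm q.2) :=
        Finset.prod_le_prod (fun q _ => by positivity) (fun q hq => hpairlow q hq)
  have hsup_pos : 0 < ⨆ kk, dist (xm kk) p :=
    lt_of_lt_of_le (by positivity) hsup_ge
  have hFge : ε0 ≤ FnFun p n xm := by
    rw [hval]
    have hnum : ((β / 2) * r m) * ((γ / 2) * r m) ^ N
        ≤ (⨅ kk, dist (xm kk) p) * ∏ q ∈ s, dist (xm q.1) (xm q.2) :=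
      mul_le_mul hmin_ge hprod_ge (by positivity)
        (Real.iInf_nonneg fun _ => dist_nonneg)
    have hden : (⨆ kk, dist (xm kk) p) ^ (N + 1) ≤ ((B + 1) * r m) ^ (N + 1) :=
      pow_le_pow_left₀ hsup_pos.le hsup_le _
    have hdenpos : 0 < (⨆ kk, dist (xm kk) p) ^ (N + 1) := pow_pos hsup_pos _
    have hstep : ((β / 2) * r m) * ((γ / 2) * r m) ^ N / ((B + 1) * r m) ^ (N + 1)
        ≤ (⨅ kk, dist (xm kk) p) * (∏ q ∈ s, dist (xm q.1) (xm q.2))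
          / (⨆ kk, dist (xm kk) p) ^ (N + 1) :=
      div_le_div₀ (mul_nonneg (Real.iInf_nonneg fun _ => dist_nonneg)
        (Finset.prod_nonneg fun _ _ => dist_nonneg)) hnum hdenpos hden
    refine le_trans (le_of_eq ?_) hstep
    rw [hε0, mul_pow, mul_pow]
    have hrne : r m ≠ 0 := hrm.ne'
    have hBne : B + 1 ≠ 0 := by positivity
    field_simp
    ring
  have h9 := le_trans hFge (le_abs_self _)
  linarith

end AuxLemmas






/-- Theorem t2.2.1. `|V(G_{X,r̃})| ≤ n` for every scaling sequence `r̃`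
iff `F_n → 0` and the annulus/sphere condition holds. -/
theorem card_vertexSet_le_iff {X : Type*} [MetricSpace X]
    (hX : UnboundedSpace X) (p : X) (n : ℕ) (hn : 2 ≤ n) :
    (∀ r : ℕ → ℝ, ScalingSeq r → Cardinal.mk ↥(VertexSet r p) ≤ (n : Cardinal)) ↔
      (CondF p n ∧ CondA p) := by
  constructor
  · intro H
    exact ⟨forward_condF hX hn H, forward_condA H⟩
  · rintro ⟨hF, hA⟩
    exact backward_direction hn hF hA.1
end

section
/- Let (X,d) be an unbounded metric space and let r̃ be a scaling sequence. If there exist two distinct vertices ν₁, ν₂ of the cluster graph G_{X,r̃} and a constant c∈ℝ⁺ with ρ⁰(ν₁)=ρ⁰(ν₂)=c, then there exists an independent set I ⊆ V(G_{X,r̃}) of cardinality continuum (|I|=𝔠) such that ρ⁰(v)=c for every v∈I. -/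
open Filter Topology
open scoped Classical

section MyAux
variable {X : Type*} [MetricSpace X] {r : ℕ → ℝ} {p : X}

lemma my_equiv_refl (x : ℕ → X) : EquivSeq r x x := by
  unfold EquivSeq
  have : (fun n => dist (x n) (x n) / r n) = fun n => (0:ℝ) := by
    funext n; simp
  rw [this]; exact tendsto_const_nhds

lemma my_equiv_symm {x y : ℕ → X} (h : EquivSeq r x y) : EquivSeq r y x := by
  have : (fun n => dist (y n) (x n) / r n) = fun n => dist (x n) (y n) / r n := by
    funext n; rw [dist_comm]
  rw [EquivSeq, this]; exact h

lemma my_equiv_trans (hr : ∀ n, 0 < r n) {x y z : ℕ → X}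
    (h1 : EquivSeq r x y) (h2 : EquivSeq r y z) : EquivSeq r x z := by
  have h0 : ∀ n, (0:ℝ) ≤ dist (x n) (z n) / r n := fun n =>
    div_nonneg dist_nonneg (hr n).le
  have hle : ∀ n, dist (x n) (z n) / r n ≤
      dist (x n) (y n) / r n + dist (y n) (z n) / r n := by
    intro n
    rw [← add_div]
    gcongr
    · exact (hr n).le
    · exact dist_triangle _ _ _
  have hsum := h1.add h2
  exact squeeze_zero h0 hle (by simpa using hsum)

lemma my_same_limit (hr : ∀ n, 0 < r n) {x y : ℕ → X} {L : ℝ}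
    (hx : Filter.Tendsto (fun n => dist (x n) p / r n) Filter.atTop (nhds L))
    (hxy : EquivSeq r x y) :
    Filter.Tendsto (fun n => dist (y n) p / r n) Filter.atTop (nhds L) := by
  have hdiff : Filter.Tendsto (fun n => dist (y n) p / r n - dist (x n) p / r n)
      Filter.atTop (nhds 0) := by
    apply squeeze_zero_norm (a := fun n => dist (x n) (y n) / r n) _ hxy
    intro n
    have h1 : |dist (y n) p - dist (x n) p| ≤ dist (x n) (y n) := by
      rw [abs_sub_comm]
      exact abs_dist_sub_le _ _ _
    calc ‖dist (y n) p / r n - dist (x n) p / r n‖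
        = |dist (y n) p - dist (x n) p| / r n := by
          rw [div_sub_div_same, Real.norm_eq_abs, abs_div, abs_of_pos (hr n)]
      _ ≤ dist (x n) (y n) / r n := by gcongr; exact (hr n).le
  have h2 := hx.add hdiff
  simp only [add_zero] at h2
  convert h2 using 1
  funext n; ring

lemma my_mem_classOf_self {x : ℕ → X} (hx : x ∈ SeqInf r p) : x ∈ classOf r p x :=
  ⟨hx, my_equiv_refl x⟩

lemma my_classOf_eq (hr : ∀ n, 0 < r n) {x y : ℕ → X}
    (h : EquivSeq r x y) : classOf r p x = classOf r p y := by
  ext z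
  constructor
  · rintro ⟨hz, hxz⟩
    exact ⟨hz, my_equiv_trans hr (my_equiv_symm h) hxz⟩
  · rintro ⟨hz, hyz⟩
    exact ⟨hz, my_equiv_trans hr h hyz⟩

lemma my_rho0_eq (hr : ∀ n, 0 < r n) {x : ℕ → X} (hx : x ∈ SeqInf r p) {L : ℝ}
    (hL : Filter.Tendsto (fun n => dist (x n) p / r n) Filter.atTop (nhds L)) :
    rho0 r p (classOf r p x) = L := by
  unfold rho0
  have hset : {L' : ℝ | ∃ y ∈ classOf r p x,
      Filter.Tendsto (fun n => dist (y n) p / r n) Filter.atTop (nhds L')} = {L} := by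
    ext L'
    constructor
    · rintro ⟨y, ⟨hy, hxy⟩, hL'⟩
      exact tendsto_nhds_unique hL' (my_same_limit hr hL hxy)
    · rintro rfl
      exact ⟨x, my_mem_classOf_self hx, hL⟩
  rw [hset, csSup_singleton]

lemma my_not_tendsto_zero {f : ℕ → ℝ} (h0 : ∀ n, 0 ≤ f n)
    (h : ¬ Filter.Tendsto f Filter.atTop (nhds 0)) :
    ∃ ε > (0:ℝ), ∃ᶠ n in Filter.atTop, ε ≤ f n := by
  rw [Metric.tendsto_atTop] at h
  push_neg at h
  obtain ⟨ε, hε, hh⟩ := h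
  refine ⟨ε, hε, Filter.frequently_atTop.2 fun N => ?_⟩
  obtain ⟨n, hn, hn2⟩ := hh N
  refine ⟨n, hn, ?_⟩
  rw [Real.dist_eq, sub_zero, abs_of_nonneg (h0 n)] at hn2
  linarith

end MyAux

/-- Lemma l2.2.4, second part. If two distinct vertices carry the same
label `c`, then there is an independent set of cardinality continuum all of whose
members carry the label `c`. -/
theorem independent_continuum_of_rho0_eq {X : Type*} [MetricSpace X]
    (hX : UnboundedSpace X) (p : X) (r : ℕ → ℝ) (hr : ScalingSeq r)
    (ν₁ ν₂ : Set (ℕ → X)) (h₁ : ν₁ ∈ VertexSet r p) (h₂ : ν₂ ∈ VertexSet r p)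
    (hne : ν₁ ≠ ν₂) (c : ℝ) (hc : 0 ≤ c)
    (e₁ : rho0 r p ν₁ = c) (e₂ : rho0 r p ν₂ = c) :
    ∃ I ⊆ VertexSet r p, Cardinal.mk ↥I = Cardinal.continuum ∧
      (∀ u ∈ I, ∀ v ∈ I, u ≠ v → ¬AdjacentCl r p u v) ∧
      ∀ v ∈ I, rho0 r p v = c := by
  obtain ⟨hrpos, hrtop⟩ := hr
  obtain ⟨x, hx, rfl⟩ := h₁
  obtain ⟨y, hy, rfl⟩ := h₂
  obtain ⟨Lx, hLx⟩ := hx.2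
  obtain ⟨Ly, hLy⟩ := hy.2
  have hcx : Lx = c := by rw [← e₁]; exact (my_rho0_eq hrpos hx hLx).symm
  have hcy : Ly = c := by rw [← e₂]; exact (my_rho0_eq hrpos hy hLy).symm
  rw [hcx] at hLx
  rw [hcy] at hLy
  have hnequiv : ¬ EquivSeq r x y := fun h => hne (my_classOf_eq hrpos h)
  obtain ⟨ε, hε, hfreq⟩ := my_not_tendsto_zero
    (fun n => div_nonneg dist_nonneg (hrpos n).le) hnequiv
  obtain ⟨e, he, heprop⟩ := Filter.extraction_of_frequently_atTop hfreq
  set z : (ℕ → Bool) → ℕ → X := fun g n =>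
    if ∃ k, e k = n ∧ k % 2 = 1 ∧ g ((k / 2).unpair.1) = true then x n else y n with hz
  have zcases : ∀ g n, z g n = x n ∨ z g n = y n := by
    intro g n
    by_cases h : ∃ k, e k = n ∧ k % 2 = 1 ∧ g ((k / 2).unpair.1) = true
    · left; simp only [hz, if_pos h]
    · right; simp only [hz, if_neg h]
  have zeven : ∀ g k, z g (e (2 * k)) = y (e (2 * k)) := by
    intro g k
    have hcond : ¬ ∃ k', e k' = e (2 * k) ∧ k' % 2 = 1 ∧ g ((k' / 2).unpair.1) = true := by
      rintro ⟨k', hk', hodd, -⟩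
      have : k' = 2 * k := he.injective hk'
      omega
    simp only [hz, if_neg hcond]
  have zodd : ∀ g m j, z g (e (2 * Nat.pair m j + 1)) =
      if g m = true then x (e (2 * Nat.pair m j + 1)) else y (e (2 * Nat.pair m j + 1)) := by
    intro g m j
    by_cases hg : g m = true
    · have hcond : ∃ k', e k' = e (2 * Nat.pair m j + 1) ∧ k' % 2 = 1 ∧
          g ((k' / 2).unpair.1) = true := by
        refine ⟨2 * Nat.pair m j + 1, rfl, by omega, ?_⟩
        have h2 : (2 * Nat.pair m j + 1) / 2 = Nat.pair m j := by omega
        rw [h2, Nat.unpair_pair]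
        exact hg
      simp only [hz, if_pos hcond, if_pos hg]
    · have hcond : ¬ ∃ k', e k' = e (2 * Nat.pair m j + 1) ∧ k' % 2 = 1 ∧
          g ((k' / 2).unpair.1) = true := by
        rintro ⟨k', hk', hodd, hgk⟩
        have hk : k' = 2 * Nat.pair m j + 1 := he.injective hk'
        subst hk
        have h2 : (2 * Nat.pair m j + 1) / 2 = Nat.pair m j := by omega
        rw [h2, Nat.unpair_pair] at hgk
        exact hg hgk
      simp only [hz, if_neg hcond, if_neg hg]
  have hztop : ∀ g, Filter.Tendsto (fun n => dist (z g n) p) Filter.atTop Filter.atTop := by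
    intro g
    rw [Filter.tendsto_atTop]
    intro b
    filter_upwards [Filter.tendsto_atTop.1 hx.1 b, Filter.tendsto_atTop.1 hy.1 b] with n h1 h2
    rcases zcases g n with h | h <;> rw [h] <;> assumption
  have hzlim : ∀ g, Filter.Tendsto (fun n => dist (z g n) p / r n)
      Filter.atTop (nhds c) := by
    intro g
    rw [tendsto_iff_norm_sub_tendsto_zero]
    apply squeeze_zero (g := fun n => |dist (x n) p / r n - c| + |dist (y n) p / r n - c|)
      (fun n => norm_nonneg _)
    · intro n
      rcases zcases g n with h | h <;> rw [h]
      · calc ‖dist (x n) p / r n - c‖ = |dist (x n) p / r n - c| := Real.norm_eq_abs _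
          _ ≤ _ := le_add_of_nonneg_right (abs_nonneg _)
      · calc ‖dist (y n) p / r n - c‖ = |dist (y n) p / r n - c| := Real.norm_eq_abs _
          _ ≤ _ := le_add_of_nonneg_left (abs_nonneg _)
    · have h1 : Filter.Tendsto (fun n => |dist (x n) p / r n - c|)
          Filter.atTop (nhds 0) := by
        have := (hLx.sub (tendsto_const_nhds (x := c))).abs
        simpa using this
      have h2 : Filter.Tendsto (fun n => |dist (y n) p / r n - c|)
          Filter.atTop (nhds 0) := by
        have := (hLy.sub (tendsto_const_nhds (x := c))).abs
        simpa using this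
      simpa using h1.add h2
  have hzinf : ∀ g, z g ∈ SeqInf r p := fun g => ⟨hztop g, c, hzlim g⟩
  have hfreq0 : ∀ g g', ∃ᶠ n in Filter.atTop, dist (z g n) (z g' n) / r n = 0 := by
    intro g g'
    rw [Filter.frequently_atTop]
    intro N
    refine ⟨e (2 * N), le_trans (by omega) he.le_apply, ?_⟩
    rw [zeven, zeven, dist_self, zero_div]
  have hfreqε : ∀ g g' m, g m ≠ g' m →
      ∃ᶠ n in Filter.atTop, ε ≤ dist (z g n) (z g' n) / r n := by
    intro g g' m hm
    rw [Filter.frequently_atTop]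
    intro N
    have hpair := Nat.right_le_pair m N
    refine ⟨e (2 * Nat.pair m N + 1), le_trans (by omega) he.le_apply, ?_⟩
    rw [zodd, zodd]
    have hd := heprop (2 * Nat.pair m N + 1)
    cases hgm : g m <;> cases hgm' : g' m <;>
      simp only [hgm, hgm'] at hm ⊢ <;> simp only [if_true, if_false, Bool.false_eq_true,
        if_neg Bool.false_ne_true, reduceIte] at hm ⊢
    · exact absurd rfl hm
    · rw [dist_comm]; exact hd
    · exact hd
    · exact absurd rfl hm
  have hnost : ∀ g g' m, g m ≠ g' m → ¬ MutuallyStable r (z g) (z g') := by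
    rintro g g' m hm ⟨L, hL⟩
    rw [Metric.tendsto_atTop] at hL
    obtain ⟨N, hN⟩ := hL (ε / 2) (by linarith)
    obtain ⟨n1, hn1, h1⟩ := Filter.frequently_atTop.1 (hfreq0 g g') N
    obtain ⟨n2, hn2, h2⟩ := Filter.frequently_atTop.1 (hfreqε g g' m hm) N
    have d1 := hN n1 hn1
    have d2 := hN n2 hn2
    rw [h1, Real.dist_eq, abs_sub_lt_iff] at d1
    rw [Real.dist_eq, abs_sub_lt_iff] at d2
    obtain ⟨d1a, d1b⟩ := d1
    obtain ⟨d2a, d2b⟩ := d2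
    linarith
  have hnoeq : ∀ g g' m, g m ≠ g' m → ¬ EquivSeq r (z g) (z g') := by
    rintro g g' m hm h
    rw [EquivSeq, Metric.tendsto_atTop] at h
    obtain ⟨N, hN⟩ := h ε hε
    obtain ⟨n2, hn2, h2⟩ := Filter.frequently_atTop.1 (hfreqε g g' m hm) N
    have := hN n2 hn2
    rw [Real.dist_eq, sub_zero,
      abs_of_nonneg (div_nonneg dist_nonneg (hrpos n2).le)] at this
    linarith
  set F : (ℕ → Bool) → Set (ℕ → X) := fun g => classOf r p (z g) with hF
  have hFinj : Function.Injective F := by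
    intro g g' hgg'
    by_contra hgg
    obtain ⟨m, hm⟩ := Function.ne_iff.1 hgg
    have hmem : z g' ∈ classOf r p (z g) := by
      show z g' ∈ F g
      rw [hgg']
      exact my_mem_classOf_self (hzinf g')
    exact hnoeq g g' m hm hmem.2
  refine ⟨Set.range F, ?_, ?_, ?_, ?_⟩
  · rintro v ⟨g, rfl⟩
    exact ⟨z g, hzinf g, rfl⟩
  · have h2 : Cardinal.mk (ℕ → Bool) = Cardinal.continuum := by
      rw [← Cardinal.power_def, Cardinal.mk_bool, Cardinal.mk_nat,
        Cardinal.two_power_aleph0]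
    have h1 := Cardinal.mk_range_eq_lift.{0, _, 0} hFinj
    rw [h2, Cardinal.lift_continuum, Cardinal.lift_uzero] at h1
    exact h1
  · rintro u ⟨g, rfl⟩ v ⟨g', rfl⟩ huv hadj
    have hgg : g ≠ g' := fun h => huv (by rw [h])
    obtain ⟨m, hm⟩ := Function.ne_iff.1 hgg
    exact hnost g g' m hm (hadj.2.2.2 (z g) (my_mem_classOf_self (hzinf g)) (z g')
      (my_mem_classOf_self (hzinf g')))
  · rintro v ⟨g, rfl⟩
    exact my_rho0_eq hrpos (hzinf g) (hzlim g)
end
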